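/- arXiv:1707.08861 — 2 statements merged into one kernel-verified Lean document; each statement's English description precedes it below -/
import Mathlib

section
/- Let e = (a,b) be a failing edge of an SPT T of G, and let v be a vertex in the detached subtree T_b. Among all swap edges for e incident to v, an edge f = (x,v) minimizing d_T(s,x) + w(f) has max-stretch at most that of any other swap edge for e incident to v; that is, μ(f) ≤ μ(f') for every swap edge f' = (x',v) for e. -/
open SimpleGraph

/-- The weighted length of a walk. -/
noncomputable def wlen {V : Type*} (W : V → V → ℝ) {G : SimpleGraph V} {u v : V}
    (p : G.Walk u v) : ℝ :=
  (p.darts.map (fun d => W d.toProd.1 d.toProd.2)).sum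

/-- The weighted distance between two vertices of a graph: the infimum of the
weighted lengths of all walks joining them. -/
noncomputable def wdist {V : Type*} (W : V → V → ℝ) (G : SimpleGraph V) (u v : V) : ℝ :=
  sInf {x : ℝ | ∃ p : G.Walk u v, x = wlen W p}

/-- `(x, y)` is a swap edge for the failing tree edge `e = (a,b)` (with `b` the child):
a non-tree edge of `G` whose endpoint `x` lies in the component of `T − e` containing the
source and whose endpoint `y` lies in the detached component, i.e. the one containing `b`. -/
def swapEdge {V : Type*} (T G : SimpleGraph V) (a b x y : V) : Prop :=
  G.Adj x y ∧ Sym2.mk x y ∉ T.edgeSet ∧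
    ¬ (T.deleteEdges {Sym2.mk a b}).Reachable b x ∧
    (T.deleteEdges {Sym2.mk a b}).Reachable b y

/-- The max-stretch `μ` of a swap edge `(x, y)` for the failing edge `e = (a,b)`:
the supremum over the vertices `u` of the detached subtree `T_b` of
`d_{T_{e/f}}(s,u) / d_{G−e}(s,u)`, where `d_{T_{e/f}}(s,u) = d_T(s,x) + w(x,y) + d_T(y,u)`. -/
noncomputable def muSt {V : Type*} (W : V → V → ℝ) (T G : SimpleGraph V)
    (s a b x y : V) : ℝ :=
  sSup {r : ℝ | ∃ u : V, (T.deleteEdges {Sym2.mk a b}).Reachable b u ∧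
    r = (wdist W T s x + W x y + wdist W T y u) /
        wdist W (G.deleteEdges {Sym2.mk a b}) s u}

/-- Let `e = (a,b)` be a failing edge of an SPT `T` of `G`, and let `v` be a vertex in the
detached subtree `T_b`.  Among all swap edges for `e` incident to `v`, an edge `f = (x,v)`
minimizing `d_T(s,x) + w(f)` has max-stretch at most that of any other swap edge for `e`
incident to `v`: `μ(f) ≤ μ(f')` for every swap edge `f' = (x',v)` for `e`. -/
theorem filtering_best_incident_swap_edge {V : Type*} [Fintype V]
    (G T : SimpleGraph V) (W : V → V → ℝ) (s a b v x : V)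
    (hWpos : ∀ u w : V, G.Adj u w → 0 < W u w)
    (hWsymm : ∀ u w : V, W u w = W w u)
    (hTG : T ≤ G) (hT : T.IsTree)
    (hSPT : ∀ u : V, wdist W T s u = wdist W G s u)
    (he : Sym2.mk a b ∈ T.edgeSet)
    (hb : ¬ (T.deleteEdges {Sym2.mk a b}).Reachable s b)
    (hconn : (G.deleteEdges {Sym2.mk a b}).Connected)
    (hf : swapEdge T G a b x v)
    (hmin : ∀ x' : V, swapEdge T G a b x' v →
      wdist W T s x + W x v ≤ wdist W T s x' + W x' v) :
    ∀ x' : V, swapEdge T G a b x' v →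
      muSt W T G s a b x v ≤ muSt W T G s a b x' v := by
  intro x' hf'
  have hD : ∀ u : V, 0 ≤ wdist W (G.deleteEdges {Sym2.mk a b}) s u := by
    intro u
    apply Real.sInf_nonneg
    rintro r ⟨p, rfl⟩
    apply List.sum_nonneg
    intro y hy
    simp only [List.mem_map] at hy
    obtain ⟨d, hd, rfl⟩ := hy
    have hadj := d.adj
    rw [SimpleGraph.deleteEdges_adj] at hadj
    exact (hWpos _ _ hadj.1).le
  have hnum := hmin x' hf'
  have hbdd : BddAbove {r : ℝ | ∃ u : V, (T.deleteEdges {Sym2.mk a b}).Reachable b u ∧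
      r = (wdist W T s x' + W x' v + wdist W T v u) /
        wdist W (G.deleteEdges {Sym2.mk a b}) s u} := by
    apply BddAbove.mono _ (Set.finite_range (fun u : V =>
      (wdist W T s x' + W x' v + wdist W T v u) /
        wdist W (G.deleteEdges {Sym2.mk a b}) s u)).bddAbove
    rintro r ⟨u, _, rfl⟩
    exact ⟨u, rfl⟩
  unfold muSt
  refine csSup_le ⟨_, v, hf.2.2.2, rfl⟩ ?_
  rintro r ⟨u, hu, rfl⟩
  have hle : (wdist W T s x + W x v + wdist W T v u) /
      wdist W (G.deleteEdges {Sym2.mk a b}) s u ≤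
      (wdist W T s x' + W x' v + wdist W T v u) /
      wdist W (G.deleteEdges {Sym2.mk a b}) s u := by
    rcases (hD u).eq_or_lt with h | h
    · rw [← h, div_zero, div_zero]
    · gcongr
  exact le_trans hle (le_csSup hbdd ⟨u, hu, rfl⟩)
end

section
/- (Tightness of 3/2 for good swap edges) For every δ > 0 there exists a 2-edge-connected positively weighted graph G with source s, an SPT T, and a tree edge e such that the good swap edge g (minimizing d_T(s,x)+w(g) among swap edges (x,y) for e) satisfies μ(g)/μ(f) > 3/2 − δ, where f is a best swap edge for e under the max-stretch criterion. -/
open SimpleGraph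

@[simp] lemma wlen_nil {V : Type*} (W : V → V → ℝ) {G : SimpleGraph V} {u : V} :
    wlen W (Walk.nil : G.Walk u u) = 0 := by simp [wlen]
@[simp] lemma wlen_cons {V : Type*} (W : V → V → ℝ) {G : SimpleGraph V} {u v w : V}
    (h : G.Adj u v) (p : G.Walk v w) :
    wlen W (Walk.cons h p) = W u v + wlen W p := by simp [wlen]
lemma wlen_ge {V : Type*} (W : V → V → ℝ) {G : SimpleGraph V} (φ : V → ℝ)
    (hφ : ∀ a b, G.Adj a b → φ b ≤ φ a + W a b) :
    ∀ {u v : V} (p : G.Walk u v), φ v - φ u ≤ wlen W p := by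
  intro u v p
  induction p with
  | nil => simp
  | cons h q ih => rw [wlen_cons]; have := hφ _ _ h; linarith
lemma wdist_eq {V : Type*} (W : V → V → ℝ) {G : SimpleGraph V} {u v : V} (c : ℝ)
    (p : G.Walk u v) (hp : wlen W p = c) (φ : V → ℝ)
    (hφ : ∀ a b, G.Adj a b → φ b ≤ φ a + W a b) (hc : φ v - φ u = c) :
    wdist W G u v = c := by
  apply le_antisymm
  · exact csInf_le ⟨c, by rintro x ⟨q, rfl⟩; rw [← hc]; exact wlen_ge W φ hφ q⟩ ⟨p, hp.symm⟩
  · exact le_csInf ⟨_, p, rfl⟩ (by rintro x ⟨q, rfl⟩; rw [← hc]; exact wlen_ge W φ hφ q)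
lemma reach_ind {V : Type*} {H : SimpleGraph V} (P : V → Prop)
    (hP : ∀ a b, H.Adj a b → P a → P b) :
    ∀ {u v : V}, H.Reachable u v → P u → P v := by
  intro u v h hu
  obtain ⟨p⟩ := h
  induction p with
  | nil => exact hu
  | cons h' q ih => exact ih (hP _ _ h' hu)
lemma preconn_of_hub {V : Type*} {H : SimpleGraph V} (h0 : V) (h : ∀ v, H.Reachable h0 v) :
    H.Preconnected := fun a b => (h a).symm.trans (h b)


def Gr : SimpleGraph (Fin 5) := fromRel (fun u v => u = 0 ∨ u = 1 ∨ v = 0 ∨ v = 1)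
def Tr : SimpleGraph (Fin 5) := fromRel (fun u v => u = 1 ∨ v = 1)
lemma Gr_adj {u v : Fin 5} : Gr.Adj u v ↔ u ≠ v ∧ (u = 0 ∨ u = 1 ∨ v = 0 ∨ v = 1) := by
  constructor
  · rintro ⟨h, h2 | h2⟩ <;> exact ⟨h, by tauto⟩
  · rintro ⟨h, h2⟩; exact ⟨h, Or.inl h2⟩
lemma Tr_adj {u v : Fin 5} : Tr.Adj u v ↔ u ≠ v ∧ (u = 1 ∨ v = 1) := by
  constructor
  · rintro ⟨h, h2 | h2⟩ <;> exact ⟨h, by tauto⟩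
  · rintro ⟨h, h2⟩; exact ⟨h, Or.inl h2⟩
lemma TG : Tr ≤ Gr := by
  intro u v h; rw [Tr_adj] at h; rw [Gr_adj]; exact ⟨h.1, by tauto⟩

noncomputable def Wt (ε : ℝ) : Fin 5 → Fin 5 → ℝ := fun u v =>
  if (u = 0 ∧ v = 1) ∨ (u = 1 ∧ v = 0) ∨ (u = 1 ∧ v = 3) ∨ (u = 3 ∧ v = 1) then ε
  else if (u = 1 ∧ v = 2) ∨ (u = 2 ∧ v = 1) ∨ (u = 1 ∧ v = 4) ∨ (u = 4 ∧ v = 1) then 1 - ε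
  else 1

lemma dadj {c d a b : Fin 5} (h : Gr.Adj a b) (h2 : s(a,b) ≠ s(c,d)) :
    (Gr.deleteEdges {s(c,d)}).Adj a b := by
  rw [SimpleGraph.deleteEdges_adj]; exact ⟨h, by simpa using h2⟩
lemma dreach2 {c d a m b : Fin 5} (h1 : Gr.Adj a m) (h2 : Gr.Adj m b)
    (n1 : s(a,m) ≠ s(c,d)) (n2 : s(m,b) ≠ s(c,d)) :
    (Gr.deleteEdges {s(c,d)}).Reachable a b :=
  ((dadj h1 n1).reachable).trans (dadj h2 n2).reachable

example : s((0:Fin 5),2) ≠ s(0,1) := by decide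
example : Gr.Adj 0 2 := Gr_adj.mpr (by decide)

lemma Gr_conn : Gr.Connected := by
  rw [connected_iff]
  refine ⟨preconn_of_hub 0 ?_, ⟨0⟩⟩
  intro v
  by_cases h : v = 0
  · subst h; rfl
  · exact (Gr_adj.mpr ⟨Ne.symm h, by tauto⟩).reachable

lemma Gr_two_conn : ∀ e' ∈ Gr.edgeSet, (Gr.deleteEdges {e'}).Connected := by
  intro e'
  induction e' using Sym2.ind with
  | _ u v =>
    intro h
    rw [mem_edgeSet, Gr_adj] at h
    rw [connected_iff]
    refine ⟨preconn_of_hub 0 ?_, ⟨0⟩⟩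
    intro w
    fin_cases u <;> fin_cases v <;> simp_all <;> fin_cases w <;>
      first
        | rfl
        | exact (dadj (Gr_adj.mpr (by decide)) (by decide)).reachable
        | exact dreach2 (m := 1) (Gr_adj.mpr (by decide)) (Gr_adj.mpr (by decide)) (by decide) (by decide)
        | exact dreach2 (m := 2) (Gr_adj.mpr (by decide)) (Gr_adj.mpr (by decide)) (by decide) (by decide)
        | exact dreach2 (m := 3) (Gr_adj.mpr (by decide)) (Gr_adj.mpr (by decide)) (by decide) (by decide)
        | exact dreach2 (m := 4) (Gr_adj.mpr (by decide)) (Gr_adj.mpr (by decide)) (by decide) (by decide)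

lemma noreach_star (x : Fin 5) (hx : x ≠ 1) :
    ¬ (Tr.deleteEdges {s((1:Fin 5), x)}).Reachable 1 x := by
  intro h
  have key : ∀ a b, (Tr.deleteEdges {s((1:Fin 5), x)}).Adj a b → a ≠ x → b ≠ x := by
    rintro a b hab ha rfl
    rw [SimpleGraph.deleteEdges_adj, Tr_adj] at hab
    obtain ⟨⟨hne, h1 | h1⟩, hmem⟩ := hab
    · subst h1; exact hmem rfl
    · exact hx h1
  exact reach_ind _ key h (Ne.symm hx) rfl

lemma Tr_tree : Tr.IsTree := by
  constructor
  · rw [connected_iff]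
    refine ⟨preconn_of_hub 1 ?_, ⟨0⟩⟩
    intro v
    by_cases h : v = 1
    · subst h; rfl
    · exact (Tr_adj.mpr ⟨Ne.symm h, Or.inl rfl⟩).reachable
  · rw [isAcyclic_iff_forall_adj_isBridge]
    intro v w h
    rw [isBridge_iff]
    rw [Tr_adj] at h
    obtain ⟨hne, h1 | h1⟩ := h
    · subst h1
      exact noreach_star w (Ne.symm hne)
    · subst h1
      intro hr
      rw [show s(v, (1:Fin 5)) = s((1:Fin 5), v) from Sym2.eq_swap] at hr
      exact noreach_star v hne hr.symm

-- main deleted tree edge: e = s(0,1)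
lemma Te_adj {a b : Fin 5} :
    (Tr.deleteEdges {s((0:Fin 5),1)}).Adj a b ↔
      (a ≠ b ∧ (a = 1 ∨ b = 1) ∧ a ≠ 0 ∧ b ≠ 0) := by
  rw [SimpleGraph.deleteEdges_adj, Tr_adj]
  constructor
  · rintro ⟨⟨hne, h1⟩, hmem⟩
    refine ⟨hne, h1, ?_, ?_⟩ <;> rintro rfl <;> apply hmem <;> simp [Sym2.eq_iff] <;> tauto
  · rintro ⟨hne, h1, h0a, h0b⟩
    refine ⟨⟨hne, h1⟩, ?_⟩
    intro hmem
    rw [Set.mem_singleton_iff, Sym2.eq_iff] at hmem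
    rcases hmem with ⟨rfl, _⟩ | ⟨_, rfl⟩
    · exact h0a rfl
    · exact h0b rfl

lemma noreach_main : ∀ {u v : Fin 5},
    (Tr.deleteEdges {s((0:Fin 5),1)}).Reachable u v → u ≠ 0 → v ≠ 0 := by
  intro u v h hu
  exact reach_ind (fun z => z ≠ 0) (by rintro a b hab ha rfl; exact (Te_adj.mp hab).2.2.2 rfl) h hu

lemma reach_main : ∀ u : Fin 5, u ≠ 0 → (Tr.deleteEdges {s((0:Fin 5),1)}).Reachable 1 u := by
  intro u hu
  fin_cases u
  · exact absurd rfl hu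
  · rfl
  all_goals exact (Te_adj.mpr (by decide)).reachable

def pot (a b c d e : ℝ) : Fin 5 → ℝ := fun v =>
  if v = 0 then a else if v = 1 then b else if v = 2 then c else if v = 3 then d else e

section dists

-- adjacency shortcuts
lemma t01 : Tr.Adj 0 1 := Tr_adj.mpr (by decide)
lemma t12 : Tr.Adj 1 2 := Tr_adj.mpr (by decide)
lemma t13 : Tr.Adj 1 3 := Tr_adj.mpr (by decide)
lemma t14 : Tr.Adj 1 4 := Tr_adj.mpr (by decide)
lemma t21 : Tr.Adj 2 1 := Tr_adj.mpr (by decide)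
lemma t31 : Tr.Adj 3 1 := Tr_adj.mpr (by decide)
lemma t41 : Tr.Adj 4 1 := Tr_adj.mpr (by decide)

-- Gr adjacency shortcuts
lemma g01 : Gr.Adj 0 1 := Gr_adj.mpr (by decide)
lemma g12 : Gr.Adj 1 2 := Gr_adj.mpr (by decide)
lemma g13 : Gr.Adj 1 3 := Gr_adj.mpr (by decide)
lemma g14 : Gr.Adj 1 4 := Gr_adj.mpr (by decide)

-- deleted-graph adjacency shortcuts (e = s(0,1))
lemma e02 : (Gr.deleteEdges {s((0:Fin 5),1)}).Adj 0 2 := dadj (Gr_adj.mpr (by decide)) (by decide)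
lemma e03 : (Gr.deleteEdges {s((0:Fin 5),1)}).Adj 0 3 := dadj (Gr_adj.mpr (by decide)) (by decide)
lemma e04 : (Gr.deleteEdges {s((0:Fin 5),1)}).Adj 0 4 := dadj (Gr_adj.mpr (by decide)) (by decide)
lemma e31 : (Gr.deleteEdges {s((0:Fin 5),1)}).Adj 3 1 := dadj (Gr_adj.mpr (by decide)) (by decide)

variable {ε : ℝ} (h1 : 0 < ε) (h2 : ε ≤ 1/2)
include h1 h2

-- potential validity lemmas
lemma potT0 : ∀ x y : Fin 5, Tr.Adj x y →
    pot 0 ε 1 (2*ε) 1 y ≤ pot 0 ε 1 (2*ε) 1 x + Wt ε x y := by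
  intro x y h; rw [Tr_adj] at h; fin_cases x <;> fin_cases y <;> simp_all [Wt, pot] <;> linarith

lemma potT2 : ∀ x y : Fin 5, Tr.Adj x y →
    pot 1 (1-ε) 0 1 (2-2*ε) y ≤ pot 1 (1-ε) 0 1 (2-2*ε) x + Wt ε x y := by
  intro x y h; rw [Tr_adj] at h; fin_cases x <;> fin_cases y <;> simp_all [Wt, pot] <;> linarith

lemma potT3 : ∀ x y : Fin 5, Tr.Adj x y →
    pot (2*ε) ε 1 0 1 y ≤ pot (2*ε) ε 1 0 1 x + Wt ε x y := by
  intro x y h; rw [Tr_adj] at h; fin_cases x <;> fin_cases y <;> simp_all [Wt, pot] <;> linarith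

lemma potT4 : ∀ x y : Fin 5, Tr.Adj x y →
    pot 1 (1-ε) (2-2*ε) 1 0 y ≤ pot 1 (1-ε) (2-2*ε) 1 0 x + Wt ε x y := by
  intro x y h; rw [Tr_adj] at h; fin_cases x <;> fin_cases y <;> simp_all [Wt, pot] <;> linarith

lemma potG0 : ∀ x y : Fin 5, Gr.Adj x y →
    pot 0 ε 1 (2*ε) 1 y ≤ pot 0 ε 1 (2*ε) 1 x + Wt ε x y := by
  intro x y h; rw [Gr_adj] at h; fin_cases x <;> fin_cases y <;> simp_all [Wt, pot] <;> linarith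

lemma potD0 : ∀ x y : Fin 5, (Gr.deleteEdges {s((0:Fin 5),1)}).Adj x y →
    pot 0 (1+ε) 1 1 1 y ≤ pot 0 (1+ε) 1 1 1 x + Wt ε x y := by
  intro x y h
  rw [SimpleGraph.deleteEdges_adj, Gr_adj] at h
  obtain ⟨⟨hne, hor⟩, hmem⟩ := h
  rw [Set.mem_singleton_iff] at hmem
  fin_cases x <;> fin_cases y <;> simp_all [Wt, pot, Sym2.eq_iff] <;> linarith

-- tree distances from 0
lemma dT00 : wdist (Wt ε) Tr 0 0 = 0 := by
  apply wdist_eq _ _ Walk.nil (by simp) _ (potT0 h1 h2); simp [pot]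
lemma dT01 : wdist (Wt ε) Tr 0 1 = ε := by
  apply wdist_eq _ _ (Walk.cons t01 Walk.nil) (by simp [Wt]) _ (potT0 h1 h2); simp [pot]
lemma dT02 : wdist (Wt ε) Tr 0 2 = 1 := by
  apply wdist_eq _ _ (Walk.cons t01 (Walk.cons t12 Walk.nil)) (by simp [Wt] <;> ring) _ (potT0 h1 h2)
  simp [pot]
lemma dT03 : wdist (Wt ε) Tr 0 3 = 2*ε := by
  apply wdist_eq _ _ (Walk.cons t01 (Walk.cons t13 Walk.nil)) (by simp [Wt] <;> ring) _ (potT0 h1 h2)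
  simp [pot]
lemma dT04 : wdist (Wt ε) Tr 0 4 = 1 := by
  apply wdist_eq _ _ (Walk.cons t01 (Walk.cons t14 Walk.nil)) (by simp [Wt] <;> ring) _ (potT0 h1 h2)
  simp [pot]

-- tree distances from 2
lemma dT21 : wdist (Wt ε) Tr 2 1 = 1-ε := by
  apply wdist_eq _ _ (Walk.cons t21 Walk.nil) (by simp [Wt]) _ (potT2 h1 h2); simp [pot]
lemma dT22 : wdist (Wt ε) Tr 2 2 = 0 := by
  apply wdist_eq _ _ Walk.nil (by simp) _ (potT2 h1 h2); simp [pot]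
lemma dT23 : wdist (Wt ε) Tr 2 3 = 1 := by
  apply wdist_eq _ _ (Walk.cons t21 (Walk.cons t13 Walk.nil)) (by simp [Wt] <;> ring) _ (potT2 h1 h2)
  simp [pot]
lemma dT24 : wdist (Wt ε) Tr 2 4 = 2-2*ε := by
  apply wdist_eq _ _ (Walk.cons t21 (Walk.cons t14 Walk.nil)) (by simp [Wt] <;> ring) _ (potT2 h1 h2)
  simp [pot]

-- tree distances from 3
lemma dT31 : wdist (Wt ε) Tr 3 1 = ε := by
  apply wdist_eq _ _ (Walk.cons t31 Walk.nil) (by simp [Wt]) _ (potT3 h1 h2); simp [pot]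
lemma dT32 : wdist (Wt ε) Tr 3 2 = 1 := by
  apply wdist_eq _ _ (Walk.cons t31 (Walk.cons t12 Walk.nil)) (by simp [Wt] <;> ring) _ (potT3 h1 h2)
  simp [pot]
lemma dT33 : wdist (Wt ε) Tr 3 3 = 0 := by
  apply wdist_eq _ _ Walk.nil (by simp) _ (potT3 h1 h2); simp [pot]
lemma dT34 : wdist (Wt ε) Tr 3 4 = 1 := by
  apply wdist_eq _ _ (Walk.cons t31 (Walk.cons t14 Walk.nil)) (by simp [Wt] <;> ring) _ (potT3 h1 h2)
  simp [pot]

-- tree distances from 4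
lemma dT41 : wdist (Wt ε) Tr 4 1 = 1-ε := by
  apply wdist_eq _ _ (Walk.cons t41 Walk.nil) (by simp [Wt]) _ (potT4 h1 h2); simp [pot]
lemma dT42 : wdist (Wt ε) Tr 4 2 = 2-2*ε := by
  apply wdist_eq _ _ (Walk.cons t41 (Walk.cons t12 Walk.nil)) (by simp [Wt] <;> ring) _ (potT4 h1 h2)
  simp [pot]
lemma dT43 : wdist (Wt ε) Tr 4 3 = 1 := by
  apply wdist_eq _ _ (Walk.cons t41 (Walk.cons t13 Walk.nil)) (by simp [Wt] <;> ring) _ (potT4 h1 h2)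
  simp [pot]
lemma dT44 : wdist (Wt ε) Tr 4 4 = 0 := by
  apply wdist_eq _ _ Walk.nil (by simp) _ (potT4 h1 h2); simp [pot]

-- Gr distances from 0
lemma dG00 : wdist (Wt ε) Gr 0 0 = 0 := by
  apply wdist_eq _ _ Walk.nil (by simp) _ (potG0 h1 h2); simp [pot]
lemma dG01 : wdist (Wt ε) Gr 0 1 = ε := by
  apply wdist_eq _ _ (Walk.cons g01 Walk.nil) (by simp [Wt]) _ (potG0 h1 h2); simp [pot]
lemma dG02 : wdist (Wt ε) Gr 0 2 = 1 := by
  apply wdist_eq _ _ (Walk.cons g01 (Walk.cons g12 Walk.nil)) (by simp [Wt] <;> ring) _ (potG0 h1 h2)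
  simp [pot]
lemma dG03 : wdist (Wt ε) Gr 0 3 = 2*ε := by
  apply wdist_eq _ _ (Walk.cons g01 (Walk.cons g13 Walk.nil)) (by simp [Wt] <;> ring) _ (potG0 h1 h2)
  simp [pot]
lemma dG04 : wdist (Wt ε) Gr 0 4 = 1 := by
  apply wdist_eq _ _ (Walk.cons g01 (Walk.cons g14 Walk.nil)) (by simp [Wt] <;> ring) _ (potG0 h1 h2)
  simp [pot]

-- (G - e) distances from 0
lemma dD01 : wdist (Wt ε) (Gr.deleteEdges {s((0:Fin 5),1)}) 0 1 = 1+ε := by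
  apply wdist_eq _ _ (Walk.cons e03 (Walk.cons e31 Walk.nil)) (by simp [Wt] <;> ring) _ (potD0 h1 h2)
  simp [pot]
lemma dD02 : wdist (Wt ε) (Gr.deleteEdges {s((0:Fin 5),1)}) 0 2 = 1 := by
  apply wdist_eq _ _ (Walk.cons e02 Walk.nil) (by simp [Wt]) _ (potD0 h1 h2); simp [pot]
lemma dD03 : wdist (Wt ε) (Gr.deleteEdges {s((0:Fin 5),1)}) 0 3 = 1 := by
  apply wdist_eq _ _ (Walk.cons e03 Walk.nil) (by simp [Wt]) _ (potD0 h1 h2); simp [pot]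
lemma dD04 : wdist (Wt ε) (Gr.deleteEdges {s((0:Fin 5),1)}) 0 4 = 1 := by
  apply wdist_eq _ _ (Walk.cons e04 Walk.nil) (by simp [Wt]) _ (potD0 h1 h2); simp [pot]

-- swap edge facts
omit h1 h2 in
lemma fin5_cases (u : Fin 5) : u = 0 ∨ u = 1 ∨ u = 2 ∨ u = 3 ∨ u = 4 := by
  fin_cases u <;> simp

omit h1 h2 in
lemma swap_g : swapEdge Tr Gr 0 1 0 2 := by
  refine ⟨Gr_adj.mpr (by decide), ?_, ?_, reach_main 2 (by decide)⟩
  · intro h; rw [SimpleGraph.mem_edgeSet, Tr_adj] at h; exact absurd h.2 (by decide)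
  · intro h; exact (noreach_main h (by decide)) rfl

omit h1 h2 in
lemma swap_f : swapEdge Tr Gr 0 1 0 3 := by
  refine ⟨Gr_adj.mpr (by decide), ?_, ?_, reach_main 3 (by decide)⟩
  · intro h; rw [SimpleGraph.mem_edgeSet, Tr_adj] at h; exact absurd h.2 (by decide)
  · intro h; exact (noreach_main h (by decide)) rfl

omit h1 h2 in
lemma swap_class {x v : Fin 5} (h : swapEdge Tr Gr 0 1 x v) :
    x = 0 ∧ (v = 2 ∨ v = 3 ∨ v = 4) := by
  obtain ⟨hadj, hnT, hnr, hr⟩ := h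
  have hx : x = 0 := by
    by_contra hx
    exact hnr (reach_main x hx)
  subst hx
  have hv0 : v ≠ 0 := fun hv => by subst hv; exact Gr.loopless.irrefl 0 hadj
  have hv1 : v ≠ 1 := by
    rintro rfl
    exact hnT (Tr.mem_edgeSet.mpr (Tr_adj.mpr (by decide)))
  refine ⟨rfl, ?_⟩
  fin_cases v <;> simp_all

lemma mu_g : muSt (Wt ε) Tr Gr 0 0 1 0 2 = 3 - 2*ε := by
  apply IsGreatest.csSup_eq
  constructor
  · refine ⟨4, reach_main 4 (by decide), ?_⟩
    rw [dT00 h1 h2, dT24 h1 h2, dD04 h1 h2, show Wt ε 0 2 = 1 by simp [Wt]]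
    ring
  · rintro r ⟨u, hu, rfl⟩
    rw [dT00 h1 h2, show Wt ε 0 2 = 1 by simp [Wt]]
    rcases fin5_cases u with rfl|rfl|rfl|rfl|rfl
    · exact absurd rfl (noreach_main hu (by decide))
    · rw [dT21 h1 h2, dD01 h1 h2, div_le_iff₀ (by linarith)]
      nlinarith
    · rw [dT22 h1 h2, dD02 h1 h2]
      rw [div_le_iff₀ (by norm_num)]
      linarith
    · rw [dT23 h1 h2, dD03 h1 h2, div_le_iff₀ (by norm_num)]
      linarith
    · rw [dT24 h1 h2, dD04 h1 h2, div_le_iff₀ (by norm_num)]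
      linarith

lemma mu_f : muSt (Wt ε) Tr Gr 0 0 1 0 3 = 2 := by
  apply IsGreatest.csSup_eq
  constructor
  · refine ⟨2, reach_main 2 (by decide), ?_⟩
    rw [dT00 h1 h2, dT32 h1 h2, dD02 h1 h2, show Wt ε 0 3 = 1 by simp [Wt]]
    ring
  · rintro r ⟨u, hu, rfl⟩
    rw [dT00 h1 h2, show Wt ε 0 3 = 1 by simp [Wt]]
    rcases fin5_cases u with rfl|rfl|rfl|rfl|rfl
    · exact absurd rfl (noreach_main hu (by decide))
    · rw [dT31 h1 h2, dD01 h1 h2, div_le_iff₀ (by linarith)]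
      nlinarith
    · rw [dT32 h1 h2, dD02 h1 h2, div_le_iff₀ (by norm_num)]
      linarith
    · rw [dT33 h1 h2, dD03 h1 h2, div_le_iff₀ (by norm_num)]
      linarith
    · rw [dT34 h1 h2, dD04 h1 h2, div_le_iff₀ (by norm_num)]
      linarith

lemma mu_h : muSt (Wt ε) Tr Gr 0 0 1 0 4 = 3 - 2*ε := by
  apply IsGreatest.csSup_eq
  constructor
  · refine ⟨2, reach_main 2 (by decide), ?_⟩
    rw [dT00 h1 h2, dT42 h1 h2, dD02 h1 h2, show Wt ε 0 4 = 1 by simp [Wt]]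
    ring
  · rintro r ⟨u, hu, rfl⟩
    rw [dT00 h1 h2, show Wt ε 0 4 = 1 by simp [Wt]]
    rcases fin5_cases u with rfl|rfl|rfl|rfl|rfl
    · exact absurd rfl (noreach_main hu (by decide))
    · rw [dT41 h1 h2, dD01 h1 h2, div_le_iff₀ (by linarith)]
      nlinarith
    · rw [dT42 h1 h2, dD02 h1 h2, div_le_iff₀ (by norm_num)]
      linarith
    · rw [dT43 h1 h2, dD03 h1 h2, div_le_iff₀ (by norm_num)]
      linarith
    · rw [dT44 h1 h2, dD04 h1 h2, div_le_iff₀ (by norm_num)]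
      linarith

end dists

/-- Tightness of the 3/2 approximation for good swap edges.  For every `δ > 0` there exists
a 2-edge-connected positively weighted graph `G` with source `s`, an SPT `T`, and a tree
edge `e = (a,b)` such that the good swap edge `g = (xg,yg)` (minimizing `d_T(s,x)+w(g)`
among swap edges for `e`) and a best swap edge `f = (xf,yf)` for `e` under the max-stretch
criterion satisfy `μ(g)/μ(f) > 3/2 − δ`. -/
theorem good_swap_edge_ratio_tight (δ : ℝ) (hδ : 0 < δ) :
    ∃ (V : Type) (_ : Fintype V) (G T : SimpleGraph V) (W : V → V → ℝ)
      (s a b xg yg xf yf : V),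
      (∀ u v : V, G.Adj u v → 0 < W u v) ∧ (∀ u v : V, W u v = W v u) ∧
      G.Connected ∧ (∀ e' ∈ G.edgeSet, (G.deleteEdges {e'}).Connected) ∧
      T ≤ G ∧ T.IsTree ∧ (∀ u : V, wdist W T s u = wdist W G s u) ∧
      Sym2.mk a b ∈ T.edgeSet ∧
      ¬ (T.deleteEdges {Sym2.mk a b}).Reachable s b ∧
      swapEdge T G a b xg yg ∧
      (∀ x' v' : V, swapEdge T G a b x' v' →
        wdist W T s xg + W xg yg ≤ wdist W T s x' + W x' v') ∧
      swapEdge T G a b xf yf ∧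
      (∀ x' v' : V, swapEdge T G a b x' v' →
        muSt W T G s a b xf yf ≤ muSt W T G s a b x' v') ∧
      0 < muSt W T G s a b xf yf ∧
      muSt W T G s a b xg yg / muSt W T G s a b xf yf > 3 / 2 - δ := by
  set ε := min δ 1 / 2 with hε
  have hm1 : 0 < min δ 1 := lt_min hδ one_pos
  have hm2 : min δ 1 ≤ 1 := min_le_right δ 1
  have hm3 : min δ 1 ≤ δ := min_le_left δ 1
  have h1 : 0 < ε := by rw [hε]; linarith
  have h2 : ε ≤ 1/2 := by rw [hε]; linarith
  have h3 : ε < δ := by rw [hε]; linarith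
  refine ⟨Fin 5, inferInstance, Gr, Tr, Wt ε, 0, 0, 1, 0, 2, 0, 3,
    ?_, ?_, Gr_conn, Gr_two_conn, TG, Tr_tree, ?_, ?_, ?_, swap_g, ?_, swap_f, ?_, ?_, ?_⟩
  · intro u v _
    simp only [Wt]
    split_ifs <;> linarith
  · intro u v
    fin_cases u <;> fin_cases v <;> simp [Wt]
  · intro u
    rcases fin5_cases u with rfl|rfl|rfl|rfl|rfl
    · rw [dT00 h1 h2, dG00 h1 h2]
    · rw [dT01 h1 h2, dG01 h1 h2]
    · rw [dT02 h1 h2, dG02 h1 h2]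
    · rw [dT03 h1 h2, dG03 h1 h2]
    · rw [dT04 h1 h2, dG04 h1 h2]
  · exact Tr.mem_edgeSet.mpr (Tr_adj.mpr (by decide))
  · intro h
    exact (noreach_main h.symm (by decide)) rfl
  · intro x' v' hsw
    obtain ⟨rfl, hv⟩ := swap_class hsw
    rw [dT00 h1 h2]
    rcases hv with rfl|rfl|rfl <;> simp [Wt]
  · intro x' v' hsw
    obtain ⟨rfl, hv⟩ := swap_class hsw
    rw [mu_f h1 h2]
    rcases hv with rfl|rfl|rfl
    · rw [mu_g h1 h2]; linarith
    · rw [mu_f h1 h2]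
    · rw [mu_h h1 h2]; linarith
  · rw [mu_f h1 h2]; norm_num
  · rw [mu_g h1 h2, mu_f h1 h2]
    rw [gt_iff_lt]
    linarith
end
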